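/- Lightlike-separated vertices lemma: Let A, B ∈ V with A ≠ B and q(A − B) = 0. If a point P ∈ V satisfies q(P − A) = 0 and q(P − B) = 0, then P lies on the line through A and B, i.e. there exists s ∈ ℝ with P = A + s • (B − A). (The intersection of two light cones whose vertices are distinct and lightlike-separated is the line joining the vertices.) -/

import Mathlib

noncomputable section

/-- Minkowski quadratic form on `ℝ³` with coordinates `(t, x, y)` indexed `0, 1, 2`. -/
def q (v : Fin 3 → ℝ) : ℝ := -(v 0)^2 + (v 1)^2 + (v 2)^2

/-- Polar bilinear form of `q`. -/
def mbil (v w : Fin 3 → ℝ) : ℝ := -(v 0) * (w 0) + (v 1) * (w 1) + (v 2) * (w 2)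

/-- The intersection of two light cones with distinct lightlike-separated vertices
is the line joining the vertices. -/
theorem lightlike_vertices_line
    (A B P : Fin 3 → ℝ) (hAB : A ≠ B) (hq : q (A - B) = 0)
    (hPA : q (P - A) = 0) (hPB : q (P - B) = 0) :
    ∃ s : ℝ, P = A + s • (B - A) := by
  have hq1 : -(A 0 - B 0) ^ 2 + (A 1 - B 1) ^ 2 + (A 2 - B 2) ^ 2 = 0 := by
    simpa [q] using hq
  have hq2 : -(P 0 - A 0) ^ 2 + (P 1 - A 1) ^ 2 + (P 2 - A 2) ^ 2 = 0 := by
    simpa [q] using hPA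
  have hq3 : -(P 0 - B 0) ^ 2 + (P 1 - B 1) ^ 2 + (P 2 - B 2) ^ 2 = 0 := by
    simpa [q] using hPB
  have hortho : (P 0 - A 0) * (B 0 - A 0)
      = (P 1 - A 1) * (B 1 - A 1) + (P 2 - A 2) * (B 2 - A 2) := by
    linear_combination (hq3 - hq1 - hq2) / 2
  have hcross : (P 1 - A 1) * (B 2 - A 2) - (P 2 - A 2) * (B 1 - A 1) = 0 := by
    have hsq : ((P 1 - A 1) * (B 2 - A 2) - (P 2 - A 2) * (B 1 - A 1)) ^ 2 = 0 := by
      linear_combination ((B 1 - A 1) ^ 2 + (B 2 - A 2) ^ 2) * hq2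
        + (P 0 - A 0) ^ 2 * hq1
        + ((P 0 - A 0) * (B 0 - A 0) + (P 1 - A 1) * (B 1 - A 1)
            + (P 2 - A 2) * (B 2 - A 2)) * hortho
    exact pow_eq_zero_iff (n := 2) (by norm_num) |>.mp hsq
  have hd0 : B 0 - A 0 ≠ 0 := by
    intro h
    apply hAB
    have h1 : B 1 - A 1 = 0 := by nlinarith [hq1, sq_nonneg (B 1 - A 1), sq_nonneg (B 2 - A 2)]
    have h2 : B 2 - A 2 = 0 := by nlinarith [hq1, sq_nonneg (B 1 - A 1), sq_nonneg (B 2 - A 2)]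
    funext i
    fin_cases i <;> simp <;> linarith
  have k1 : (B 0 - A 0) * (P 1 - A 1) = (P 0 - A 0) * (B 1 - A 1) := by
    have hz : (B 0 - A 0) * ((B 0 - A 0) * (P 1 - A 1) - (P 0 - A 0) * (B 1 - A 1)) = 0 := by
      linear_combination (-(P 1 - A 1)) * hq1 - (B 1 - A 1) * hortho + (B 2 - A 2) * hcross
    rcases mul_eq_zero.mp hz with h | h
    · exact absurd h hd0
    · linarith
  have k2 : (B 0 - A 0) * (P 2 - A 2) = (P 0 - A 0) * (B 2 - A 2) := by
    have hz : (B 0 - A 0) * ((B 0 - A 0) * (P 2 - A 2) - (P 0 - A 0) * (B 2 - A 2)) = 0 := by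
      linear_combination (-(P 2 - A 2)) * hq1 - (B 2 - A 2) * hortho - (B 1 - A 1) * hcross
    rcases mul_eq_zero.mp hz with h | h
    · exact absurd h hd0
    · linarith
  refine ⟨(P 0 - A 0) / (B 0 - A 0), ?_⟩
  funext i
  fin_cases i
  · simp [Pi.add_apply, Pi.smul_apply, smul_eq_mul]
    field_simp
    ring
  · simp [Pi.add_apply, Pi.smul_apply, smul_eq_mul]
    field_simp
    linear_combination k1
  · simp [Pi.add_apply, Pi.smul_apply, smul_eq_mul]
    field_simp
    linear_combination k2
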